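/- Let λ be a dual feasible cycle packing for G (i.e. λ_C ≥ 0 for every conflicted cycle C of G and Σ_{C : e ∈ C} λ_C ≤ |θ_e| for every edge e ∈ E), let x̄ ∈ MC(G), and define the duality gap γ := ⟨θ, x̄⟩ − Σ_C λ_C − Σ_{e ∈ E⁻} θ_e. If f ∈ E satisfies γ < θ̃_f, where θ̃_f is the reduced cost of f with respect to λ, then every optimal solution x* of the multicut problem min_{x ∈ MC(G)} ⟨θ, x⟩ satisfies x*_f = 0. -/

import Mathlib

variable {V : Type} [Fintype V] [DecidableEq V]

/-- `M` is (the edge set of) a multicut of `G`. -/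
def IsMulticut (G : SimpleGraph V) [DecidableRel G.Adj] (M : Finset (Sym2 V)) : Prop :=
  M ⊆ G.edgeFinset ∧ ∃ f : V → V, ∀ x y, G.Adj x y → (s(x, y) ∈ M ↔ f x ≠ f y)

/-- `C` is the edge set of a cycle of `G`. -/
def IsCycleEdgeSet (G : SimpleGraph V) (C : Finset (Sym2 V)) : Prop :=
  ∃ (a : V) (w : G.Walk a a), w.IsCycle ∧ C = w.edges.toFinset

set_option linter.unusedSectionVars false
set_option maxHeartbeats 1000000

section Aux
variable {G : SimpleGraph V}

lemma walk_no_change {f : V → V} : ∀ {a b : V} (p : G.Walk a b),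
    (∀ d ∈ p.darts, f d.fst = f d.snd) → f a = f b := by
  intro a b p
  induction p with
  | nil => intro _; rfl
  | cons h q ih =>
    intro hd
    rw [SimpleGraph.Walk.darts_cons] at hd
    exact (hd _ List.mem_cons_self).trans (ih fun d hdd => hd d (List.mem_cons_of_mem _ hdd))

lemma walk_one_change {f : V → V} : ∀ {a b : V} (p : G.Walk a b),
    (p.darts.countP (fun d => decide (f d.fst ≠ f d.snd))) = 1 → f a ≠ f b := by
  intro a b p
  induction p with
  | nil => simp
  | @cons u v w h q ih =>
    rw [SimpleGraph.Walk.darts_cons, List.countP_cons]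
    by_cases hc : f u = f v
    · intro h1
      have : List.countP (fun d => decide (f d.toProd.1 ≠ f d.toProd.2)) q.darts = 1 := by
        simpa [hc] using h1
      exact hc ▸ ih this
    · intro h1
      have h0 : List.countP (fun d => decide (f d.toProd.1 ≠ f d.toProd.2)) q.darts = 0 := by
        simp only [hc, decide_not, ne_eq, decide_eq_true_eq, if_pos, not_false_iff] at h1 ⊢
        omega
      have : ∀ d ∈ q.darts, f d.fst = f d.snd := by
        intro d hd
        have := List.countP_eq_zero.mp h0 d hd
        simpa using this
      have hvw := walk_no_change q this
      exact fun huw => hc (huw.trans hvw.symm)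


lemma cycle_two_edges (M : Finset (Sym2 V)) (f : V → V)
    (hM : ∀ x y, G.Adj x y → (s(x,y) ∈ M ↔ f x ≠ f y))
    {C : Finset (Sym2 V)} (hC : IsCycleEdgeSet G C) {e₀ : Sym2 V}
    (he₀C : e₀ ∈ C) (he₀M : e₀ ∈ M) : ∃ e ∈ C, e ∈ M ∧ e ≠ e₀ := by
  by_contra hcon
  push_neg at hcon
  obtain ⟨a, w, hw, rfl⟩ := hC
  set q : G.Dart → Bool := fun d => decide (d.edge ∈ M) with hq
  set L := w.darts.filter q with hL
  have hnodupE : w.edges.Nodup := hw.isTrail.edges_nodup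
  have hsub : (L.map SimpleGraph.Dart.edge).Sublist w.edges :=
    (List.filter_sublist).map _
  have hnodupL : (L.map SimpleGraph.Dart.edge).Nodup := hnodupE.sublist hsub
  have hall : ∀ d ∈ L, d.edge = e₀ := by
    intro d hd
    rw [hL, List.mem_filter] at hd
    have hdM : d.edge ∈ M := by simpa [hq] using hd.2
    have hdC : d.edge ∈ w.edges.toFinset := by
      rw [List.mem_toFinset]
      exact List.mem_map_of_mem hd.1
    exact hcon _ hdC hdM
  have hlen1 : L.length ≤ 1 := by
    match hLl : L with
    | [] => simp
    | [d] => simp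
    | d1 :: d2 :: t =>
      exfalso
      simp only [List.map_cons, List.nodup_cons, List.mem_cons, List.mem_map] at hnodupL
      exact hnodupL.1 (Or.inl (((hall d1 (by simp)).trans (hall d2 (by simp)).symm)))
  have hex : ∃ d ∈ w.darts, d.edge = e₀ := by
    rw [List.mem_toFinset] at he₀C
    obtain ⟨d, hd, hde⟩ := List.mem_map.mp he₀C
    exact ⟨d, hd, hde⟩
  obtain ⟨d, hd, hde⟩ := hex
  have hdL : d ∈ L := by
    rw [hL, List.mem_filter]
    exact ⟨hd, by simp [hq, hde, he₀M]⟩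
  have hlen : L.length = 1 := le_antisymm hlen1 (List.length_pos_of_mem hdL)
  have hcount : w.darts.countP q = 1 := by
    rw [List.countP_eq_length_filter]; exact hlen
  have hcount2 : w.darts.countP (fun d => decide (f d.fst ≠ f d.snd)) = 1 := by
    rw [← hcount]
    apply List.countP_congr
    intro d hd
    have : d.edge = s(d.fst, d.snd) := rfl
    simp only [hq, this, hM d.fst d.snd d.adj]
  exact walk_one_change w hcount2 rfl

end Aux

lemma key_bound (G : SimpleGraph V) [DecidableRel G.Adj] (θ : Sym2 V → ℝ)
    (ι : Type) [Fintype ι] (cyc : ι → Finset (Sym2 V))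
    (hcyc : ∀ i, IsCycleEdgeSet G (cyc i))
    (hconf : ∀ i, ((cyc i).filter (fun e => θ e < 0)).card = 1)
    (lam : ι → ℝ) (hlam : ∀ i, 0 ≤ lam i)
    (hfeas : ∀ e ∈ G.edgeFinset,
      ∑ i ∈ Finset.univ.filter (fun i => e ∈ cyc i), lam i ≤ |θ e|)
    (tθ : Sym2 V → ℝ)
    (htθ : ∀ e, tθ e =
      (|θ e| - ∑ i ∈ Finset.univ.filter (fun i => e ∈ cyc i), lam i) * Real.sign (θ e))
    (M : Finset (Sym2 V)) (hMsub : M ⊆ G.edgeFinset)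
    (f : V → V) (hMf : ∀ x y, G.Adj x y → (s(x, y) ∈ M ↔ f x ≠ f y)) :
    (∑ i, lam i) + (∑ e ∈ G.edgeFinset.filter (fun e => θ e < 0), θ e)
      + ∑ e ∈ M.filter (fun e => 0 < θ e), tθ e ≤ ∑ e ∈ M, θ e := by
  classical
  set S : Sym2 V → ℝ := fun e => ∑ i ∈ Finset.univ.filter (fun i => e ∈ cyc i), lam i with hS
  set A := M.filter (fun e => 0 < θ e) with hA
  set Eneg := G.edgeFinset.filter (fun e => θ e < 0) with hEneg
  set B := Eneg \ M with hB
  have hcycE : ∀ i, cyc i ⊆ G.edgeFinset := by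
    intro i e he
    obtain ⟨a, w, hw, hCe⟩ := hcyc i
    rw [hCe, List.mem_toFinset] at he
    rw [SimpleGraph.mem_edgeFinset]
    exact w.edges_subset_edgeSet he
  -- step 1 : sum over M splits
  have h1 : ∑ e ∈ M, θ e = ∑ e ∈ A, θ e + ∑ e ∈ M.filter (fun e => θ e < 0), θ e := by
    rw [← Finset.sum_filter_add_sum_filter_not M (fun e => 0 < θ e) θ]
    congr 1
    apply (Finset.sum_subset _ _).symm
    · intro e he
      simp only [Finset.mem_filter] at he ⊢
      exact ⟨he.1, by linarith [he.2]⟩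
    · intro e he hne
      simp only [Finset.mem_filter, not_lt] at he
      simp only [Finset.mem_filter, not_and, not_lt] at hne
      linarith [he.2, hne he.1]
  have h2 : ∑ e ∈ Eneg, θ e = ∑ e ∈ M.filter (fun e => θ e < 0), θ e + ∑ e ∈ B, θ e := by
    rw [← Finset.sum_filter_add_sum_filter_not Eneg (fun e => e ∈ M) θ]
    congr 1
    · apply Finset.sum_congr _ (fun _ _ => rfl)
      ext e
      simp only [hEneg, Finset.mem_filter, SimpleGraph.mem_edgeFinset]
      constructor
      · rintro ⟨⟨_, h⟩, hm⟩; exact ⟨hm, h⟩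
      · rintro ⟨hm, h⟩; exact ⟨⟨SimpleGraph.mem_edgeFinset.mp (hMsub hm), h⟩, hm⟩
    · apply Finset.sum_congr _ (fun _ _ => rfl)
      rw [hB, Finset.sdiff_eq_filter]
  -- step 2 : on A, θ = tθ + S
  have h3 : ∑ e ∈ A, θ e = ∑ e ∈ A, tθ e + ∑ e ∈ A, S e := by
    rw [← Finset.sum_add_distrib]
    apply Finset.sum_congr rfl
    intro e he
    rw [hA, Finset.mem_filter] at he
    rw [htθ e, Real.sign_of_pos he.2, mul_one, abs_of_pos he.2]
    ring
  -- step 3 : on B, -θ ≥ S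
  have h4 : ∑ e ∈ B, S e ≤ ∑ e ∈ B, (-θ e) := by
    apply Finset.sum_le_sum
    intro e he
    rw [hB, Finset.mem_sdiff, hEneg, Finset.mem_filter] at he
    have := hfeas e he.1.1
    rw [abs_of_neg he.1.2] at this
    exact this
  -- step 4 : packing bound
  have h5 : ∑ i, lam i ≤ ∑ e ∈ A, S e + ∑ e ∈ B, S e := by
    have hswap : ∀ (T : Finset (Sym2 V)),
        ∑ e ∈ T, S e = ∑ i, ∑ e ∈ T, (if e ∈ cyc i then lam i else 0) := by
      intro T
      rw [Finset.sum_comm]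
      apply Finset.sum_congr rfl
      intro e _
      show ∑ i ∈ Finset.univ.filter (fun i => e ∈ cyc i), lam i = _
      rw [Finset.sum_filter]
    rw [hswap A, hswap B, ← Finset.sum_add_distrib]
    apply Finset.sum_le_sum
    intro i _
    rcases eq_or_lt_of_le (hlam i) with hlz | hlp
    · rw [← hlz]
      apply add_nonneg <;> exact Finset.sum_nonneg (fun e _ => by positivity)
    · -- the unique negative edge e₀ of cyc i
      obtain ⟨e₀, he₀⟩ := Finset.card_eq_one.mp (hconf i)
      have he₀mem : e₀ ∈ cyc i ∧ θ e₀ < 0 := by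
        have : e₀ ∈ (cyc i).filter (fun e => θ e < 0) := he₀ ▸ Finset.mem_singleton_self e₀
        simpa using this
      have witness : ∀ (T : Finset (Sym2 V)) (e : Sym2 V), e ∈ T → e ∈ cyc i →
          lam i ≤ ∑ e ∈ T, (if e ∈ cyc i then lam i else 0) := by
        intro T e heT heC
        calc lam i = if e ∈ cyc i then lam i else 0 := by rw [if_pos heC]
        _ ≤ ∑ e ∈ T, (if e ∈ cyc i then lam i else 0) :=
          Finset.single_le_sum (f := fun e => if e ∈ cyc i then lam i else 0)
            (fun x _ => by positivity) heT
      by_cases he₀M : e₀ ∈ M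
      · -- cycle inequality gives another edge, which must be positive
        obtain ⟨e, heC, heM, hene⟩ := cycle_two_edges M f hMf (hcyc i) he₀mem.1 he₀M
        have hepos : 0 < θ e := by
          have hnn : ¬ θ e < 0 := by
            intro hneg
            have : e ∈ (cyc i).filter (fun e => θ e < 0) := Finset.mem_filter.mpr ⟨heC, hneg⟩
            rw [he₀] at this
            exact hene (Finset.mem_singleton.mp this)
          have hSe : lam i ≤ ∑ j ∈ Finset.univ.filter (fun j => e ∈ cyc j), lam j :=
            Finset.single_le_sum (fun j _ => hlam j) (Finset.mem_filter.mpr ⟨Finset.mem_univ i, heC⟩)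
          have hfe := hfeas e (hcycE i heC)
          rw [not_lt] at hnn
          rw [abs_of_nonneg hnn] at hfe
          rcases eq_or_lt_of_le hnn with h0 | h0
          · exfalso; linarith
          · exact h0
        have : lam i ≤ ∑ e ∈ A, (if e ∈ cyc i then lam i else 0) :=
          witness A e (Finset.mem_filter.mpr ⟨heM, hepos⟩) heC
        have hBnn : (0:ℝ) ≤ ∑ e ∈ B, (if e ∈ cyc i then lam i else 0) :=
          Finset.sum_nonneg (fun e _ => by positivity)
        linarith
      · have : lam i ≤ ∑ e ∈ B, (if e ∈ cyc i then lam i else 0) := by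
          apply witness B e₀ _ he₀mem.1
          rw [hB, Finset.mem_sdiff, hEneg, Finset.mem_filter]
          exact ⟨⟨hcycE i he₀mem.1, he₀mem.2⟩, he₀M⟩
        have hAnn : (0:ℝ) ≤ ∑ e ∈ A, (if e ∈ cyc i then lam i else 0) :=
          Finset.sum_nonneg (fun e _ => by positivity)
        linarith
  have h4' : ∑ e ∈ B, (-θ e) = - ∑ e ∈ B, θ e := by rw [Finset.sum_neg_distrib]
  rw [h4'] at h4
  linarith

theorem stmt_14 (G : SimpleGraph V) [DecidableRel G.Adj] (θ : Sym2 V → ℝ)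
    (ι : Type) [Fintype ι] (cyc : ι → Finset (Sym2 V))
    (hcyc : ∀ i, IsCycleEdgeSet G (cyc i))
    (hconf : ∀ i, ((cyc i).filter (fun e => θ e < 0)).card = 1)
    (lam : ι → ℝ) (hlam : ∀ i, 0 ≤ lam i)
    (hfeas : ∀ e ∈ G.edgeFinset,
      ∑ i ∈ Finset.univ.filter (fun i => e ∈ cyc i), lam i ≤ |θ e|)
    (xbar : Finset (Sym2 V)) (hxbar : IsMulticut G xbar)
    (tθ : Sym2 V → ℝ)
    (htθ : ∀ e, tθ e =
      (|θ e| - ∑ i ∈ Finset.univ.filter (fun i => e ∈ cyc i), lam i) * Real.sign (θ e))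
    (f : Sym2 V) (hf : f ∈ G.edgeFinset)
    (hgap : (∑ e ∈ xbar, θ e) - (∑ i, lam i)
        - (∑ e ∈ G.edgeFinset.filter (fun e => θ e < 0), θ e) < tθ f) :
    ∀ M, IsMulticut G M → (∀ N, IsMulticut G N → ∑ e ∈ M, θ e ≤ ∑ e ∈ N, θ e) →
      f ∉ M := by
  intro M hM hopt hfM
  obtain ⟨hxsub, g, hg⟩ := hxbar
  obtain ⟨hMsub, fM, hfM'⟩ := hM
  have hpos : ∀ e ∈ G.edgeFinset, 0 < θ e → 0 ≤ tθ e := by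
    intro e he hp
    rw [htθ e, Real.sign_of_pos hp, mul_one]
    have h1 := hfeas e he
    rw [abs_of_pos hp] at h1 ⊢
    linarith
  have hx := key_bound G θ ι cyc hcyc hconf lam hlam hfeas tθ htθ xbar hxsub g hg
  have hMx := key_bound G θ ι cyc hcyc hconf lam hlam hfeas tθ htθ M hMsub fM hfM'
  have hxnn : (0:ℝ) ≤ ∑ e ∈ xbar.filter (fun e => 0 < θ e), tθ e := by
    apply Finset.sum_nonneg
    intro e he
    rw [Finset.mem_filter] at he
    exact hpos e (hxsub he.1) he.2
  have htθf : 0 < tθ f := by linarith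
  have hθf : 0 < θ f := by
    by_contra hle
    rw [not_lt] at hle
    rcases eq_or_lt_of_le hle with h0 | h0
    · rw [htθ f, h0, Real.sign_zero, mul_zero] at htθf
      exact lt_irrefl _ htθf
    · have h1 := hfeas f hf
      rw [abs_of_neg h0] at h1
      rw [htθ f, Real.sign_of_neg h0, abs_of_neg h0] at htθf
      nlinarith
  have hfMp : f ∈ M.filter (fun e => 0 < θ e) := Finset.mem_filter.mpr ⟨hfM, hθf⟩
  have hfle : tθ f ≤ ∑ e ∈ M.filter (fun e => 0 < θ e), tθ e := by
    apply Finset.single_le_sum (f := tθ) _ hfMp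
    intro e he
    rw [Finset.mem_filter] at he
    exact hpos e (hMsub he.1) he.2
  have hle := hopt xbar ⟨hxsub, g, hg⟩
  linarith
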